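/- Let D(n,d,l) denote the number of Tukey depth histograms achievable by n-point sets in general position in R^d whose deepest point has depth exactly l. Then for n ≥ 2l + d - 2, D(n,d,l) = sum_{i=1}^{l} D(n-1,d,i). -/

import Mathlib

/-- `numHist n d l` is the number of Tukey depth histograms of `n`-point sets in general
position in `ℝ^d` whose deepest point has depth exactly `l`.  By the characterization
theorem, these are exactly the vectors `(D 1, …, D l)` of nonnegative integers with
`D l > 0`, total sum `n`, and `D 1 + ⋯ + D (i-1) ≥ 2i + d - 3` for every `2 ≤ i ≤ l`
with `D i > 0`. -/
noncomputable def numHist (n d l : ℕ) : ℕ :=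
  Set.ncard {D : ℕ → ℕ |
    (∀ j, j = 0 ∨ l < j → D j = 0) ∧ 0 < D l ∧
    (∑ j ∈ Finset.Icc 1 l, D j) = n ∧
    ∀ i, 2 ≤ i → 0 < D i → 2 * i + d - 3 ≤ ∑ j ∈ Finset.Icc 1 (i - 1), D j}

/-- The histogram set. -/
def histSet (n d l : ℕ) : Set (ℕ → ℕ) :=
  {D : ℕ → ℕ |
    (∀ j, j = 0 ∨ l < j → D j = 0) ∧ 0 < D l ∧
    (∑ j ∈ Finset.Icc 1 l, D j) = n ∧
    ∀ i, 2 ≤ i → 0 < D i → 2 * i + d - 3 ≤ ∑ j ∈ Finset.Icc 1 (i - 1), D j}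

lemma numHist_eq (n d l : ℕ) : numHist n d l = (histSet n d l).ncard := rfl

lemma histSet_finite (n d l : ℕ) : (histSet n d l).Finite := by
  have h : histSet n d l ⊆
      (fun f : Fin (l+1) → Fin (n+1) => fun j : ℕ =>
        if h : j < l + 1 then (f ⟨j, h⟩ : ℕ) else 0) '' Set.univ := by
    intro D hD
    obtain ⟨h0, hpos, hsum, hcon⟩ := hD
    have hle : ∀ j, D j ≤ n := by
      intro j
      by_cases hj : j ∈ Finset.Icc 1 l
      · calc D j ≤ ∑ k ∈ Finset.Icc 1 l, D k :=
              Finset.single_le_sum (fun k _ => Nat.zero_le _) hj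
          _ = n := hsum
      · simp only [Finset.mem_Icc, not_and_or, not_le] at hj
        have : D j = 0 := h0 j (by omega)
        omega
    refine ⟨fun j => ⟨D j, Nat.lt_succ_of_le (hle j)⟩, Set.mem_univ _, ?_⟩
    funext j
    by_cases hj : j < l + 1
    · simp [hj]
    · simp only [hj, dif_neg, not_false_iff]
      exact (h0 j (Or.inr (by omega))).symm
  exact Set.Finite.subset ((Set.finite_univ).image _) h

lemma histSet_disjoint (m d : ℕ) {i i' : ℕ} (h : i ≠ i') :
    Disjoint (histSet m d i) (histSet m d i') := by
  rw [Set.disjoint_left]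
  rintro D ⟨h0, hpos, -, -⟩ ⟨h0', hpos', -, -⟩
  rcases Nat.lt_or_ge i i' with hlt | hge
  · exact absurd (h0 i' (Or.inr hlt)) (by omega)
  · have : i' < i := lt_of_le_of_ne hge (Ne.symm h)
    exact absurd (h0' i (Or.inr this)) (by omega)

lemma ncard_biUnion {ι : Type*} (s : Finset ι) (f : ι → Set (ℕ → ℕ))
    (hfin : ∀ i ∈ s, (f i).Finite)
    (hdisj : ∀ i ∈ s, ∀ j ∈ s, i ≠ j → Disjoint (f i) (f j)) :
    (⋃ i ∈ s, f i).ncard = ∑ i ∈ s, (f i).ncard := by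
  classical
  induction s using Finset.induction with
  | empty => simp
  | insert a s hx ih =>
    have hfinA : (f a).Finite := hfin a (Finset.mem_insert_self a s)
    have hfinU : (⋃ i ∈ s, f i).Finite :=
      Set.Finite.biUnion s.finite_toSet (fun i hi => hfin i (Finset.mem_insert_of_mem hi))
    have hdisjA : Disjoint (f a) (⋃ i ∈ s, f i) := by
      apply Set.disjoint_iUnion₂_right.mpr
      intro i hi
      exact hdisj a (Finset.mem_insert_self a s) i (Finset.mem_insert_of_mem hi)
        (by rintro rfl; exact hx hi)
    have hU : (⋃ i ∈ insert a s, f i) = f a ∪ ⋃ i ∈ s, f i := by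
      simp [Set.biUnion_insert]
    rw [Finset.sum_insert hx, hU, Set.ncard_union_eq hdisjA hfinA hfinU,
      ih (fun i hi => hfin i (Finset.mem_insert_of_mem hi))
        (fun i hi j hj hij => hdisj i (Finset.mem_insert_of_mem hi) j
          (Finset.mem_insert_of_mem hj) hij)]

theorem numHist_recurrence {n d l : ℕ} (hd : 2 ≤ d) (hl : 1 ≤ l)
    (hn : 2 * l + d - 2 ≤ n) :
    numHist n d l = ∑ i ∈ Finset.Icc 1 l, numHist (n - 1) d i := by
  classical
  set add : (ℕ → ℕ) → (ℕ → ℕ) := fun D j => if j = l then D j + 1 else D j with hadd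
  have hinj : Function.Injective add := by
    intro D D' h
    funext j
    have h1 := congrFun h j
    by_cases hj : j = l
    · subst hj; simpa [hadd] using h1
    · simpa [hadd, hj] using h1
  have key : histSet n d l = add '' (⋃ i ∈ Finset.Icc 1 l, histSet (n-1) d i) := by
    ext D
    constructor
    · rintro ⟨h0, hpos, hsum, hcon⟩
      set D' : ℕ → ℕ := fun j => if j = l then D j - 1 else D j with hD'
      have haddD : add D' = D := by
        funext j
        by_cases hj : j = l <;> simp [hadd, hD', hj]
        · subst hj; omega
      -- the set of positive indices of D'
      set T := (Finset.Icc 1 l).filter (fun j => 0 < D' j) with hT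
      have hsum' : ∑ j ∈ Finset.Icc 1 l, D' j = n - 1 := by
        have hmem : l ∈ Finset.Icc 1 l := by simp [hl]
        rw [← Finset.add_sum_erase _ _ hmem] at hsum
        rw [← Finset.add_sum_erase _ D' hmem]
        have h1 : D' l = D l - 1 := by simp [hD']
        have h2 : ∑ j ∈ (Finset.Icc 1 l).erase l, D' j
            = ∑ j ∈ (Finset.Icc 1 l).erase l, D j := by
          apply Finset.sum_congr rfl
          intro j hj
          have : j ≠ l := (Finset.mem_erase.mp hj).1
          simp [hD', this]
        omega
      have hn2 : 2 ≤ n := by omega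
      have hTne : T.Nonempty := by
        by_contra hc
        rw [Finset.not_nonempty_iff_eq_empty] at hc
        have : ∑ j ∈ Finset.Icc 1 l, D' j = 0 := by
          apply Finset.sum_eq_zero
          intro j hj
          by_contra hz
          have : j ∈ T := Finset.mem_filter.mpr ⟨hj, Nat.pos_of_ne_zero hz⟩
          simp [hc] at this
        omega
      set i := T.max' hTne with hi
      have hiT : i ∈ T := T.max'_mem hTne
      have hiIcc : i ∈ Finset.Icc 1 l := (Finset.mem_filter.mp hiT).1
      have hipos : 0 < D' i := (Finset.mem_filter.mp hiT).2
      have hile : i ≤ l := (Finset.mem_Icc.mp hiIcc).2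
      have hzero' : ∀ j, j = 0 ∨ i < j → D' j = 0 := by
        intro j hj
        rcases hj with rfl | hj
        · have : D 0 = 0 := h0 0 (Or.inl rfl)
          have : (0:ℕ) ≠ l := by omega
          simp [hD', this, h0 0 (Or.inl rfl)]
        · by_contra hz
          have hjpos : 0 < D' j := Nat.pos_of_ne_zero hz
          have hjl : j ≤ l := by
            by_contra hjl
            push_neg at hjl
            have hDj : D j = 0 := h0 j (Or.inr hjl)
            have hjne : j ≠ l := by omega
            have : D' j = D j := by simp [hD', hjne]
            omega
          have hj1 : 1 ≤ j := by omega
          have : j ∈ T := Finset.mem_filter.mpr ⟨Finset.mem_Icc.mpr ⟨hj1, hjl⟩, hjpos⟩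
          have := T.le_max' j this
          omega
      refine ⟨D', Set.mem_iUnion₂.mpr ⟨i, hiIcc, ?_⟩, haddD⟩
      refine ⟨hzero', hipos, ?_, ?_⟩
      · -- sum over Icc 1 i equals n - 1
        rw [← hsum']
        apply Finset.sum_subset
        · intro j hj
          rw [Finset.mem_Icc] at *
          omega
        · intro j hj hj'
          rw [Finset.mem_Icc] at hj
          rw [Finset.mem_Icc] at hj'
          exact hzero' j (Or.inr (by omega))
      · intro i' hi2 hipos'
        have hi'l : i' ≤ i := by
          by_contra hc
          push_neg at hc
          have := hzero' i' (Or.inr hc)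
          omega
        have hDi' : 0 < D i' := by
          by_cases h : i' = l
          · subst h; exact hpos
          · have : D' i' = D i' := by simp [hD', h]
            omega
        have := hcon i' hi2 hDi'
        have heq : ∑ j ∈ Finset.Icc 1 (i' - 1), D' j = ∑ j ∈ Finset.Icc 1 (i' - 1), D j := by
          apply Finset.sum_congr rfl
          intro j hj
          rw [Finset.mem_Icc] at hj
          have : j ≠ l := by omega
          simp [hD', this]
        omega
    · rintro ⟨D', hD', rfl⟩
      rw [Set.mem_iUnion₂] at hD'
      obtain ⟨i, hiIcc, h0, hpos, hsum, hcon⟩ := hD'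
      rw [Finset.mem_Icc] at hiIcc
      obtain ⟨hi1, hil⟩ := hiIcc
      have hD'le : ∀ j, i < j → D' j = 0 := fun j hj => h0 j (Or.inr hj)
      have hsum_l : ∑ j ∈ Finset.Icc 1 l, D' j = n - 1 := by
        rw [← hsum]
        symm
        apply Finset.sum_subset
        · intro j hj; rw [Finset.mem_Icc] at *; omega
        · intro j hj hj'
          rw [Finset.mem_Icc] at hj hj'
          exact h0 j (Or.inr (by omega))
      refine ⟨?_, ?_, ?_, ?_⟩
      · intro j hj
        rcases hj with rfl | hj
        · have : (0:ℕ) ≠ l := by omega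
          simp [hadd, this, h0 0 (Or.inl rfl)]
        · have : j ≠ l := by omega
          simp [hadd, this, h0 j (Or.inr (by omega))]
      · simp [hadd]
      · have hmem : l ∈ Finset.Icc 1 l := by simp [hl]
        rw [← Finset.add_sum_erase _ _ hmem]
        rw [← Finset.add_sum_erase _ D' hmem] at hsum_l
        have h2 : ∑ j ∈ (Finset.Icc 1 l).erase l, add D' j
            = ∑ j ∈ (Finset.Icc 1 l).erase l, D' j := by
          apply Finset.sum_congr rfl
          intro j hj
          have : j ≠ l := (Finset.mem_erase.mp hj).1
          simp [hadd, this]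
        have h3 : add D' l = D' l + 1 := by simp [hadd]
        omega
      · intro i' hi2 hipos'
        have heq : ∑ j ∈ Finset.Icc 1 (i' - 1), add D' j
            = ∑ j ∈ Finset.Icc 1 (i' - 1), D' j := by
          apply Finset.sum_congr rfl
          intro j hj
          rw [Finset.mem_Icc] at hj
          by_cases hjl : j = l
          · -- then l ≤ i' - 1 < i', but i' ≤ l would fail; derive contradiction or fine
            exfalso
            -- add D' i' > 0 means i' = l or D' i' > 0 hence i' ≤ i ≤ l; j = l ≤ i'-1 < i' ≤ l
            have hi'le : i' ≤ l := by
              by_cases h : i' = l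
              · omega
              · have : add D' i' = D' i' := by simp [hadd, h]
                have : 0 < D' i' := by omega
                by_contra hc
                push_neg at hc
                have := h0 i' (Or.inr (by omega))
                omega
            omega
          · simp [hadd, hjl]
        rw [heq]
        by_cases h : i' = l
        · by_cases hil' : i = l
          · have hpos' : 0 < D' i' := by rw [h, ← hil']; exact hpos
            exact hcon i' hi2 hpos'
          · -- i < l, prefix sum is full sum n-1 ≥ 2l + d - 3
            have hfull : ∑ j ∈ Finset.Icc 1 (i' - 1), D' j = n - 1 := by
              rw [← hsum]
              symm
              apply Finset.sum_subset
              · intro j hj; rw [Finset.mem_Icc] at *; omega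
              · intro j hj hj'
                rw [Finset.mem_Icc] at hj hj'
                exact h0 j (Or.inr (by omega))
            omega
        · have : add D' i' = D' i' := by simp [hadd, h]
          exact hcon i' hi2 (by omega)
  rw [numHist_eq, key, Set.ncard_image_of_injective _ hinj,
    ncard_biUnion _ _ (fun i _ => histSet_finite _ _ _)
      (fun i _ j _ hij => histSet_disjoint _ _ hij)]
  rfl
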